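/- Under setup (S), if v = 0, then for every α > 1/3 the variables (X_n − e·n)/n^α converge to the one-point distribution at 0: for every ε > 0, lim_{n→∞} ℙ(|X_n − e·n| > ε·n^α) = 0; equivalently, lim_{n→∞} ℙ((X_n − e·n)/n^α ≤ x) equals 1 for every x > 0 and equals 0 for every x < 0. -/

import Mathlib

open Polynomial Filter Set MeasureTheory

/-- Sum of the coefficients `p i` of `P` over indices `0 ≤ i ≤ y`. -/
noncomputable def cdfSum (P : Polynomial ℝ) (y : ℝ) : ℝ :=
  ∑ i ∈ P.support, if (i : ℝ) ≤ y then P.coeff i else 0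

/-- The standard normal cumulative distribution function. -/
noncomputable def stdNormalCDF (x : ℝ) : ℝ :=
  (Real.sqrt (2 * Real.pi))⁻¹ * ∫ u in Set.Iic x, Real.exp (-u ^ 2 / 2)


lemma W1_ne_zero (k : ℕ) (hk : 1 ≤ k) (b : ℕ → Polynomial ℝ) (D : ℝ)
    (Q : Polynomial ℂ)
    (hQ : Q = X ^ k -
      ∑ j ∈ Finset.range k, Polynomial.C (((b (j + 1)).eval 1 : ℝ) : ℂ) * X ^ (k - (j + 1)))
    (hmult : Q.rootMultiplicity (D : ℂ) = 1) :
    (k:ℝ) * D^(k-1) -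
      ∑ j ∈ Finset.range k, ((k-(j+1) : ℕ):ℝ) * (b (j+1)).eval 1 * D^(k-(j+1)-1) ≠ 0 := by
  -- real polynomial
  set Qr : Polynomial ℝ := X ^ k -
      ∑ j ∈ Finset.range k, Polynomial.C ((b (j + 1)).eval 1) * X ^ (k - (j + 1)) with hQr
  have hmap : Q = Qr.map (algebraMap ℝ ℂ) := by
    simp [hQ, hQr, Polynomial.map_sub, Polynomial.map_pow, Polynomial.map_sum,
      Polynomial.map_mul, Polynomial.map_C, algebraMap_eq]
  have hQrne : Qr ≠ 0 := by
    intro h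
    have : Qr.coeff k = 0 := by rw [h]; simp
    rw [hQr] at this
    simp only [coeff_sub, coeff_X_pow, if_pos rfl, Polynomial.finset_sum_coeff,
      coeff_C_mul, coeff_X_pow] at this
    have hz : ∀ j ∈ Finset.range k, (b (j + 1)).eval 1 * (if k = k - (j+1) then (1:ℝ) else 0) = 0 := by
      intro j hj
      have : k ≠ k - (j+1) := by omega
      simp [this]
    rw [Finset.sum_congr rfl hz] at this
    simp at this
  have hQne : Q ≠ 0 := by
    rw [hmap]
    simpa using (Polynomial.map_ne_zero_iff (algebraMap ℝ ℂ).injective).2 hQrne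
  -- derivative of Q at D is nonzero
  have hder : Q.derivative.eval (D:ℂ) ≠ 0 := by
    intro h0
    have hroot : Q.IsRoot (D:ℂ) := (Polynomial.rootMultiplicity_pos hQne).1 (by omega)
    have h1 : 1 < Q.rootMultiplicity (D:ℂ) := by
      rw [Polynomial.one_lt_rootMultiplicity_iff_isRoot_iterate_derivative hQne]
      intro m hm
      interval_cases m
      · exact hroot
      · simpa [Polynomial.IsRoot] using h0
    omega
  intro hW
  apply hder
  rw [hmap, Polynomial.derivative_map]
  have hDalg : ((D:ℂ)) = algebraMap ℝ ℂ D := rfl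
  rw [hDalg, Polynomial.eval_map, Polynomial.eval₂_at_apply]
  have : Qr.derivative.eval D =
      (k:ℝ) * D^(k-1) -
      ∑ j ∈ Finset.range k, ((k-(j+1) : ℕ):ℝ) * (b (j+1)).eval 1 * D^(k-(j+1)-1) := by
    rw [hQr]
    simp only [derivative_sub, derivative_X_pow, Polynomial.derivative_sum,
      Polynomial.derivative_C_mul, eval_sub, eval_mul, eval_pow, eval_natCast, eval_X,
      Polynomial.eval_finset_sum, eval_C]
    congr 1
    exact Finset.sum_congr rfl fun j hj => by ring
  rw [this, hW]
  simp

lemma contDiff_polyeval (p : Polynomial ℝ) {n : WithTop ℕ∞} : ContDiff ℝ n fun x => p.eval x := by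
  have h : (fun x : ℝ => p.eval x)
      = fun x => ∑ i ∈ Finset.range (p.natDegree + 1), p.coeff i * x ^ i := by
    funext x; exact Polynomial.eval_eq_sum_range x
  rw [h]
  exact ContDiff.sum fun i _ => (contDiff_const).mul (contDiff_id.pow i)

lemma deriv_identity (k : ℕ) (b : ℕ → Polynomial ℝ) (lam : ℝ → ℝ) {I : Set ℝ}
    (hIopen : IsOpen I)
    (hroot : ∀ x ∈ I, (lam x)^k = ∑ j ∈ Finset.range k, (b (j+1)).eval x * (lam x)^(k-(j+1)))
    {x : ℝ} (hx : x ∈ I) (hdiff : HasDerivAt lam (deriv lam x) x) :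
    ((k:ℝ) * (lam x)^(k-1) -
      ∑ j ∈ Finset.range k, ((k-(j+1) : ℕ):ℝ) * (b (j+1)).eval x * (lam x)^(k-(j+1)-1))
        * deriv lam x
      = ∑ j ∈ Finset.range k, ((b (j+1)).derivative.eval x) * (lam x)^(k-(j+1)) := by
  set g : ℝ → ℝ := fun y => (lam y)^k - ∑ j ∈ Finset.range k, (b (j+1)).eval y * (lam y)^(k-(j+1))
    with hg
  have hgd : HasDerivAt g
      ((k:ℝ) * (lam x)^(k-1) * deriv lam x -
        ∑ j ∈ Finset.range k, ((b (j+1)).derivative.eval x * (lam x)^(k-(j+1)) +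
          (b (j+1)).eval x * (((k-(j+1):ℕ):ℝ) * (lam x)^(k-(j+1)-1) * deriv lam x))) x := by
    refine HasDerivAt.sub (hdiff.pow k) (HasDerivAt.fun_sum fun j _ => ?_)
    exact ((b (j+1)).hasDerivAt x).mul (hdiff.pow _)
  have hg0 : deriv g x = 0 := by
    have : g =ᶠ[nhds x] fun _ => (0:ℝ) := by
      filter_upwards [hIopen.mem_nhds hx] with y hy
      simp [hg, sub_eq_zero.2 (hroot y hy)]
    rw [this.deriv_eq, deriv_const]
  have hG := hgd.deriv
  rw [hg0] at hG
  rw [Finset.sum_add_distrib] at hG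
  rw [sub_mul, Finset.sum_mul]
  have h2 : ∑ j ∈ Finset.range k, ((k-(j+1) : ℕ):ℝ) * (b (j+1)).eval x * (lam x)^(k-(j+1)-1) * deriv lam x
      = ∑ j ∈ Finset.range k, (b (j+1)).eval x * (((k-(j+1):ℕ):ℝ) * (lam x)^(k-(j+1)-1) * deriv lam x) :=
    Finset.sum_congr rfl fun j _ => by ring
  rw [h2]
  linarith

lemma cubic_bound (k : ℕ) (b : ℕ → Polynomial ℝ)
    (δ : ℝ) (hδ : 0 < δ) (lam : ℝ → ℝ)
    (hlamC2 : ContDiffOn ℝ 2 lam (Set.Ioo (1 - δ) (1 + δ)))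
    (hroot : ∀ x ∈ Set.Ioo (1 - δ) (1 + δ),
      (lam x)^k = ∑ j ∈ Finset.range k, (b (j+1)).eval x * (lam x)^(k-(j+1)))
    (D : ℝ) (hD : D = lam 1) (hDpos : 0 < D)
    (hW1 : (k:ℝ) * D^(k-1) -
      ∑ j ∈ Finset.range k, ((k-(j+1) : ℕ):ℝ) * (b (j+1)).eval 1 * D^(k-(j+1)-1) ≠ 0)
    (e : ℝ) (he : e = deriv lam 1 / D)
    (hv0 : -(deriv lam 1) ^ 2 + D * deriv (deriv lam) 1 + D * deriv lam 1 = 0) :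
    ∃ η K : ℝ, 0 < η ∧ η < δ ∧
      (∀ x ∈ Set.Icc (1-η) (1+η), 0 < lam x ∧ 0 < x) ∧
      (∀ x ∈ Set.Icc (1-η) (1+η),
        |Real.log (lam x) - Real.log D - e * Real.log x| ≤ K * |x-1|^3) := by
  classical
  set I := Set.Ioo (1-δ) (1+δ) with hIdef
  have hIopen : IsOpen I := isOpen_Ioo
  have h1I : (1:ℝ) ∈ I := by constructor <;> simp <;> linarith
  set A : ℝ → ℝ := fun x => ∑ j ∈ Finset.range k,
    ((b (j+1)).derivative.eval x) * (lam x)^(k-(j+1)) with hAdef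
  set W : ℝ → ℝ := fun x => (k:ℝ) * (lam x)^(k-1) -
    ∑ j ∈ Finset.range k, ((k-(j+1) : ℕ):ℝ) * (b (j+1)).eval x * (lam x)^(k-(j+1)-1) with hWdef
  have hA2 : ContDiffOn ℝ 2 A I :=
    ContDiffOn.sum fun j _ => ((contDiff_polyeval _).contDiffOn.mul (hlamC2.pow _))
  have hW2 : ContDiffOn ℝ 2 W I := by
    refine ContDiffOn.sub (contDiff_const.contDiffOn.mul (hlamC2.pow _))
      (ContDiffOn.sum fun j _ => ?_)
    exact (contDiff_const.contDiffOn.mul (contDiff_polyeval _).contDiffOn).mul (hlamC2.pow _)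
  have hW1' : W 1 ≠ 0 := by simpa [hWdef, ← hD] using hW1
  have hlampos1 : 0 < lam 1 := hD ▸ hDpos
  have hlamCA : ContinuousAt lam 1 := (hlamC2.contDiffAt (hIopen.mem_nhds h1I)).continuousAt
  have hWCA : ContinuousAt W 1 := (hW2.contDiffAt (hIopen.mem_nhds h1I)).continuousAt
  have hev : ∀ᶠ x in nhds 1, x ∈ I ∧ W x ≠ 0 ∧ 0 < lam x ∧ 0 < x := by
    filter_upwards [hIopen.mem_nhds h1I, hWCA.eventually_ne hW1',
      hlamCA.eventually (eventually_gt_nhds hlampos1), eventually_gt_nhds one_pos]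
      with x h1 h2 h3 h4
    exact ⟨h1, h2, h3, h4⟩
  rcases Metric.eventually_nhds_iff_ball.1 hev with ⟨r, hr, hball⟩
  set J := Metric.ball (1:ℝ) r with hJdef
  have hJopen : IsOpen J := Metric.isOpen_ball
  have h1J : (1:ℝ) ∈ J := Metric.mem_ball_self hr
  have hJ : ∀ x ∈ J, x ∈ I ∧ W x ≠ 0 ∧ 0 < lam x ∧ 0 < x := fun x hx => hball x hx
  have hJI : J ⊆ I := fun x hx => (hJ x hx).1
  -- deriv lam has values of HasDerivAt on J
  have hlamD : ∀ x ∈ J, HasDerivAt lam (deriv lam x) x := fun x hx =>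
    (((hlamC2.differentiableOn (by norm_num)).differentiableAt
      (hIopen.mem_nhds (hJI hx)))).hasDerivAt
  -- C³ smoothness of lam on J
  have hderiv_eq : ∀ x ∈ J, deriv lam x = A x / W x := by
    intro x hx
    have h := deriv_identity k b lam hIopen hroot (hJI hx) (hlamD x hx)
    rw [eq_div_iff (hJ x hx).2.1]
    simp only [hAdef, hWdef]
    linear_combination h
  have hlam3 : ContDiffOn ℝ 3 lam J := by
    have hstep : ContDiffOn ℝ 2 (deriv lam) J := by
      refine ContDiffOn.congr ?_ hderiv_eq
      exact (hA2.mono hJI).div (hW2.mono hJI) (fun x hx => (hJ x hx).2.1)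
    have := (contDiffOn_succ_iff_deriv_of_isOpen (n := 2) hJopen).2
      ⟨(hlamC2.mono hJI).differentiableOn (by norm_num), by simp, hstep⟩
    norm_num at this; exact this
  -- the function f and its derivatives at 1
  set f : ℝ → ℝ := fun x => Real.log (lam x) - Real.log D - e * Real.log x with hfdef
  have hf3 : ContDiffOn ℝ 3 f J := by
    refine ContDiffOn.sub (ContDiffOn.sub ?_ contDiffOn_const) (contDiffOn_const.mul ?_)
    · exact hlam3.log (fun x hx => (hJ x hx).2.2.1.ne')
    · exact fun x hx => (Real.contDiffAt_log.2 (hJ x hx).2.2.2.ne').contDiffWithinAt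
  set φ : ℝ → ℝ := fun x => deriv lam x / lam x - e * x⁻¹ with hφdef
  have hfD : ∀ x ∈ J, HasDerivAt f (φ x) x := by
    intro x hx
    have h1 : HasDerivAt (fun y => Real.log (lam y)) (deriv lam x / lam x) x :=
      (hlamD x hx).log (hJ x hx).2.2.1.ne'
    have h2 : HasDerivAt (fun y : ℝ => e * Real.log y) (e * x⁻¹) x :=
      (Real.hasDerivAt_log (hJ x hx).2.2.2.ne').const_mul e
    simpa [hfdef, hφdef] using (h1.fun_sub (hasDerivAt_const x (Real.log D))).fun_sub h2
  have hderivf : Set.EqOn (deriv f) φ J := fun x hx => (hfD x hx).deriv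
  have hf1 : f 1 = 0 := by simp [hfdef, ← hD]
  have hf'1 : deriv f 1 = 0 := by
    rw [hderivf h1J]
    simp only [hφdef]
    rw [← hD] at *
    rw [he]
    field_simp
    ring
  have hf''1 : deriv (deriv f) 1 = 0 := by
    have hEq : deriv f =ᶠ[nhds 1] φ :=
      Filter.eventuallyEq_of_mem (hJopen.mem_nhds h1J) hderivf
    rw [hEq.deriv_eq]
    have hl2 : HasDerivAt (deriv lam) (deriv (deriv lam) 1) 1 := by
      have hc1 : ContDiffOn ℝ 1 (deriv lam) I := hlamC2.deriv_of_isOpen hIopen (by norm_num)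
      exact ((hc1.differentiableOn (by norm_num)).differentiableAt
        (hIopen.mem_nhds h1I)).hasDerivAt
    have h1 : HasDerivAt (fun x => deriv lam x / lam x)
        ((deriv (deriv lam) 1 * lam 1 - deriv lam 1 * deriv lam 1) / (lam 1)^2) 1 :=
      hl2.div (hlamD 1 h1J) hlampos1.ne'
    have h2 : HasDerivAt (fun x : ℝ => e * x⁻¹) (e * (-(1^2)⁻¹ : ℝ)) 1 :=
      (hasDerivAt_inv one_ne_zero).const_mul e
    have h3 := (h1.fun_sub h2).deriv
    rw [h3]
    rw [← hD] at *
    rw [he] at *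
    field_simp
    linear_combination hv0
  -- the interval and the constant
  set η := min (r/2) (δ/2) with hη
  have hηpos : 0 < η := lt_min (by linarith) (by linarith)
  have hηδ : η < δ := lt_of_le_of_lt (min_le_right _ _) (by linarith)
  set Kc := Set.Icc (1-η) (1+η) with hKc
  have hKcJ : Kc ⊆ J := by
    intro x hx
    rw [hJdef, Metric.mem_ball, Real.dist_eq]
    have h1 : |x - 1| ≤ η := abs_le.2 ⟨by linarith [hx.1], by linarith [hx.2]⟩
    exact lt_of_le_of_lt h1 (lt_of_le_of_lt (min_le_left _ _) (by linarith))
  have h1Kc : (1:ℝ) ∈ Kc := ⟨by linarith, by linarith⟩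
  have hKcC : IsCompact Kc := isCompact_Icc
  have hconv : Convex ℝ Kc := convex_Icc _ _
  set g2 := deriv (deriv f) with hg2
  have hdf2 : ContDiffOn ℝ 2 (deriv f) J := hf3.deriv_of_isOpen hJopen (by norm_num)
  have hg2C1 : ContDiffOn ℝ 1 g2 J := hdf2.deriv_of_isOpen hJopen (by norm_num)
  have hg2diff : ∀ x ∈ Kc, DifferentiableAt ℝ g2 x := fun x hx =>
    (hg2C1.differentiableOn (by norm_num)).differentiableAt (hJopen.mem_nhds (hKcJ hx))
  have hg3cont : ContinuousOn (deriv g2) Kc :=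
    (hg2C1.continuousOn_deriv_of_isOpen hJopen (by norm_num)).mono hKcJ
  obtain ⟨C, hC⟩ := hKcC.exists_bound_of_continuousOn hg3cont
  set K := max C 0 with hK
  have hK0 : (0:ℝ) ≤ K := le_max_right _ _
  have habs : ∀ x ∈ Kc, ∀ y ∈ Set.uIcc 1 x, |y - 1| ≤ |x - 1| := by
    intro x _ y hy
    have hx1 : -(|x-1|) ≤ x - 1 := neg_abs_le _
    have hx2 : x - 1 ≤ |x-1| := le_abs_self _
    rw [Set.mem_uIcc] at hy
    rw [abs_le]
    rcases hy with ⟨ha,hb⟩|⟨ha,hb⟩ <;> constructor <;> linarith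
  have step1 : ∀ x ∈ Kc, |g2 x| ≤ K * |x - 1| := by
    intro x hx
    have h := Convex.norm_image_sub_le_of_norm_deriv_le (C := K) hg2diff
      (fun y hy => le_trans (hC y hy) (le_max_left C 0)) hconv h1Kc hx
    rw [Real.norm_eq_abs, Real.norm_eq_abs] at h
    simpa [hf''1] using h
  have step2 : ∀ x ∈ Kc, |deriv f x| ≤ (K * |x - 1|) * |x - 1| := by
    intro x hx
    have hsub : Set.uIcc 1 x ⊆ Kc := Set.uIcc_subset_Icc h1Kc hx
    have hdiff' : ∀ y ∈ Set.uIcc 1 x, DifferentiableAt ℝ (deriv f) y := fun y hy =>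
      (hdf2.differentiableOn (by norm_num)).differentiableAt (hJopen.mem_nhds (hKcJ (hsub hy)))
    have hbound : ∀ y ∈ Set.uIcc 1 x, ‖deriv (deriv f) y‖ ≤ K * |x - 1| := by
      intro y hy
      have h1 := step1 y (hsub hy)
      have h2 := habs x hx y hy
      rw [Real.norm_eq_abs]
      exact le_trans h1 (mul_le_mul_of_nonneg_left h2 hK0)
    have h := Convex.norm_image_sub_le_of_norm_deriv_le hdiff' hbound (convex_uIcc 1 x)
      Set.left_mem_uIcc Set.right_mem_uIcc
    rw [Real.norm_eq_abs, Real.norm_eq_abs] at h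
    simpa [hf'1] using h
  have step3 : ∀ x ∈ Kc, |f x| ≤ ((K * |x - 1|) * |x - 1|) * |x - 1| := by
    intro x hx
    have hsub : Set.uIcc 1 x ⊆ Kc := Set.uIcc_subset_Icc h1Kc hx
    have hdiff' : ∀ y ∈ Set.uIcc 1 x, DifferentiableAt ℝ f y := fun y hy =>
      (hf3.differentiableOn (by norm_num)).differentiableAt (hJopen.mem_nhds (hKcJ (hsub hy)))
    have hbound : ∀ y ∈ Set.uIcc 1 x, ‖deriv f y‖ ≤ (K * |x - 1|) * |x - 1| := by
      intro y hy
      have h1 := step2 y (hsub hy)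
      have h2 := habs x hx y hy
      rw [Real.norm_eq_abs]
      refine le_trans h1 ?_
      have h3 : K * |y-1| ≤ K * |x-1| := mul_le_mul_of_nonneg_left h2 hK0
      have h4 : (0:ℝ) ≤ K * |y-1| := mul_nonneg hK0 (abs_nonneg _)
      exact mul_le_mul h3 h2 (abs_nonneg _) (mul_nonneg hK0 (abs_nonneg _))
    have h := Convex.norm_image_sub_le_of_norm_deriv_le hdiff' hbound (convex_uIcc 1 x)
      Set.left_mem_uIcc Set.right_mem_uIcc
    rw [Real.norm_eq_abs, Real.norm_eq_abs] at h
    simpa [hf1] using h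
  refine ⟨η, K, hηpos, hηδ, fun x hx => ⟨(hJ x (hKcJ hx)).2.2.1, (hJ x (hKcJ hx)).2.2.2⟩, ?_⟩
  intro x hx
  have h := step3 x hx
  calc |f x| ≤ ((K * |x - 1|) * |x - 1|) * |x - 1| := h
    _ = K * |x-1|^3 := by ring

lemma exp_lim (K c p q : ℝ) (hc : 0 < c) (hpq : p < q) (hq : 0 < q) :
    Filter.Tendsto (fun n : ℕ => Real.exp (K * (n:ℝ)^p - c * (n:ℝ)^q)) Filter.atTop (nhds 0) := by
  have hR : Filter.Tendsto (fun n : ℕ => (n:ℝ)^q * (K * (n:ℝ)^(p-q) - c)) Filter.atTop Filter.atBot := by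
    refine Filter.Tendsto.atTop_mul_neg (C := -c) (by linarith) ?_ ?_
    · exact (tendsto_rpow_atTop hq).comp tendsto_natCast_atTop_atTop
    · have hA : Filter.Tendsto (fun n : ℕ => (n:ℝ)^(p-q)) Filter.atTop (nhds 0) := by
        have := (tendsto_rpow_neg_atTop (by linarith : 0 < q - p)).comp
          (tendsto_natCast_atTop_atTop (R := ℝ))
        simpa [Function.comp_def, neg_sub] using this
      have := (hA.const_mul K).sub_const c
      simpa using this
  have heq : ∀ᶠ n : ℕ in Filter.atTop,
      (n:ℝ)^q * (K * (n:ℝ)^(p-q) - c) = K * (n:ℝ)^p - c * (n:ℝ)^q := by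
    filter_upwards [Filter.eventually_ge_atTop 1] with n hn
    have hnpos : (0:ℝ) < n := by exact_mod_cast hn
    rw [mul_sub, ← mul_assoc, mul_comm ((n:ℝ)^q) K, mul_assoc, ← Real.rpow_add hnpos]
    ring_nf
  have h1 : Filter.Tendsto (fun n : ℕ => K * (n:ℝ)^p - c * (n:ℝ)^q) Filter.atTop Filter.atBot :=
    Filter.Tendsto.congr' heq hR
  exact Real.tendsto_exp_atBot.comp h1

-- arithmetic helpers on rpow
lemma rpow_arith1 (n : ℕ) (hn : 1 ≤ n) (β K : ℝ) :
    (n:ℝ) * (K * ((n:ℝ)^(-β))^3) = K * (n:ℝ)^(1-3*β) := by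
  have hnR : (0:ℝ) < n := by exact_mod_cast hn
  have h3 : ((n:ℝ)^(-β))^(3:ℕ) = (n:ℝ)^(-β*3) := by
    rw [← Real.rpow_natCast ((n:ℝ)^(-β)) 3, ← Real.rpow_mul hnR.le]
    norm_num
  rw [h3]
  have h1 : (n:ℝ) * (n:ℝ)^(-β*3) = (n:ℝ)^(1-3*β) := by
    nth_rewrite 1 [← Real.rpow_one (n:ℝ)]
    rw [← Real.rpow_add hnR]
    congr 1; ring
  calc (n:ℝ) * (K * (n:ℝ)^(-β*3)) = K * ((n:ℝ) * (n:ℝ)^(-β*3)) := by ring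
    _ = K * (n:ℝ)^(1-3*β) := by rw [h1]

lemma rpow_arith2 (n : ℕ) (hn : 1 ≤ n) (α β ε : ℝ) :
    (ε * (n:ℝ)^α) * ((n:ℝ)^(-β)/2) = (ε/2) * (n:ℝ)^(α-β) := by
  have hnR : (0:ℝ) < n := by exact_mod_cast hn
  have h1 : (n:ℝ)^α * (n:ℝ)^(-β) = (n:ℝ)^(α-β) := by
    rw [← Real.rpow_add hnR]
    ring_nf
  calc (ε * (n:ℝ)^α) * ((n:ℝ)^(-β)/2) = (ε/2) * ((n:ℝ)^α * (n:ℝ)^(-β)) := by ring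
    _ = (ε/2) * (n:ℝ)^(α-β) := by rw [h1]

-- exponential form of the Chernoff quotient
lemma quotient_exp_form (L Dv x : ℝ) (hL : 0 < L) (hD : 0 < Dv) (hx : 0 < x) (n : ℕ) (M : ℝ) :
    L^n / (Dv^n * x ^ M) = Real.exp (n * Real.log L - n * Real.log Dv - M * Real.log x) := by
  have h1 : L^n = Real.exp ((n:ℝ) * Real.log L) := by
    rw [Real.exp_nat_mul, Real.exp_log hL]
  have h2 : Dv^n = Real.exp ((n:ℝ) * Real.log Dv) := by
    rw [Real.exp_nat_mul, Real.exp_log hD]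
  have h3 : x ^ M = Real.exp (M * Real.log x) := by
    rw [Real.rpow_def_of_pos hx, mul_comm]
  rw [h1, h2, h3, ← Real.exp_add, ← Real.exp_sub]
  congr 1; ring

section Helpers

lemma chernoff_bound' (P : Polynomial ℝ) (hP : ∀ i, 0 ≤ P.coeff i) (x M : ℝ) (hx : 0 < x)
    (cond : ℕ → Prop) [DecidablePred cond] (hc : ∀ i, cond i → x ^ M ≤ x ^ (i : ℝ)) :
    (∑ i ∈ P.support, if cond i then P.coeff i else 0) ≤ P.eval x / x ^ M := by
  have hxM : (0:ℝ) < x ^ M := Real.rpow_pos_of_pos hx M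
  rw [le_div_iff₀ hxM]
  have heval : P.eval x = ∑ i ∈ P.support, P.coeff i * x ^ (i:ℝ) := by
    rw [Polynomial.eval_eq_sum, Polynomial.sum_def]
    refine Finset.sum_congr rfl fun i _ => ?_
    rw [Real.rpow_natCast]
  rw [heval, Finset.sum_mul]
  refine Finset.sum_le_sum fun i _ => ?_
  by_cases h : cond i
  · simp only [h, if_true]
    exact mul_le_mul_of_nonneg_left (hc i h) (hP i)
  · simp only [h, if_false, zero_mul]
    exact mul_nonneg (hP i) (Real.rpow_pos_of_pos hx _).le
end Helpers

lemma log_lower (t : ℝ) (h0 : 0 ≤ t) (h2 : t ≤ 1/2) : t/2 ≤ Real.log (1+t) := by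
  have hxp0 : (0:ℝ) < 1 + t := by linarith
  have hinv := Real.log_le_sub_one_of_pos (inv_pos.2 hxp0)
  rw [Real.log_inv] at hinv
  have he1 : 1 - (1+t)⁻¹ = t / (1+t) := by field_simp; ring
  have h3 : t/2 ≤ t / (1+t) := by
    rw [div_le_div_iff₀ two_pos hxp0]
    nlinarith
  linarith

lemma log_upper (t : ℝ) (h0 : 0 ≤ t) (h2 : t ≤ 1/2) : Real.log (1-t) ≤ -t := by
  have h := Real.log_le_sub_one_of_pos (show (0:ℝ) < 1 - t by linarith)
  linarith

set_option maxHeartbeats 1000000 in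
theorem embedding_clt_one_point_limit
    (k : ℕ) (hk : 1 ≤ k)
    (P : ℕ → Polynomial ℝ) (b : ℕ → Polynomial ℝ)
    (hPcoeff : ∀ n i, ∃ m : ℕ, (P n).coeff i = (m : ℝ))
    (hPpos : ∀ n, 1 ≤ n → 0 < (P n).eval 1)
    (hbint : ∀ j i, ∃ m : ℤ, (b j).coeff i = (m : ℝ))
    (hrec : ∀ n, k < n → ∀ x : ℝ,
      (P n).eval x = ∑ j ∈ Finset.range k, (b (j + 1)).eval x * (P (n - (j + 1))).eval x)
    (F : ℝ → ℝ → ℝ)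
    (hF : ∀ x l : ℝ,
      F x l = l ^ k - ∑ j ∈ Finset.range k, (b (j + 1)).eval x * l ^ (k - (j + 1)))
    (δ : ℝ) (hδ : 0 < δ) (lam : ℝ → ℝ)
    (hlamC2 : ContDiffOn ℝ 2 lam (Set.Ioo (1 - δ) (1 + δ)))
    (hlamroot : ∀ x ∈ Set.Ioo (1 - δ) (1 + δ), F x (lam x) = 0)
    (D : ℝ) (hD : D = lam 1) (hDpos : 0 < D)
    (Q : Polynomial ℂ)
    (hQ : Q = X ^ k -
      ∑ j ∈ Finset.range k, Polynomial.C (((b (j + 1)).eval 1 : ℝ) : ℂ) * X ^ (k - (j + 1)))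
    (hmult : Q.rootMultiplicity (D : ℂ) = 1)
    (hdom : ∀ μ : ℂ, Q.eval μ = 0 → μ ≠ (D : ℂ) → ‖μ‖ < D)
    (a : ℝ → ℝ)
    (hunif : TendstoUniformlyOn (fun n x => (P n).eval x / lam x ^ n) a
      Filter.atTop (Set.Ioo (1 - δ) (1 + δ)))
    (ha1 : ContinuousAt a 1) (hapos : 0 < a 1)
    (e v : ℝ) (he : e = deriv lam 1 / D)
    (hv : v = (-(deriv lam 1) ^ 2 + D * deriv (deriv lam) 1 + D * deriv lam 1) / D ^ 2)
    (hv0 : v = 0) :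
    ∀ α : ℝ, 1 / 3 < α → ∀ ε : ℝ, 0 < ε →
      Filter.Tendsto (fun n : ℕ =>
        (∑ i ∈ (P n).support,
          if ε * (n : ℝ) ^ α < |(i : ℝ) - e * n| then (P n).coeff i else 0) / (P n).eval 1)
        Filter.atTop (nhds 0) := by
  classical
  intro α hα ε hε
  have hcoeff : ∀ n i, 0 ≤ (P n).coeff i := fun n i => by
    obtain ⟨m, hm⟩ := hPcoeff n i; rw [hm]; positivity
  have hroot : ∀ x ∈ Set.Ioo (1-δ) (1+δ),
      (lam x)^k = ∑ j ∈ Finset.range k, (b (j+1)).eval x * (lam x)^(k-(j+1)) := by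
    intro x hx
    have h := hlamroot x hx
    rw [hF] at h
    linarith
  have hW1 := W1_ne_zero k hk b D Q hQ hmult
  have hD0 : D ≠ 0 := ne_of_gt hDpos
  have hv0' : -(deriv lam 1) ^ 2 + D * deriv (deriv lam) 1 + D * deriv lam 1 = 0 := by
    have h : (-(deriv lam 1)^2 + D * deriv (deriv lam) 1 + D * deriv lam 1) / D^2 = 0 := by
      rw [← hv, hv0]
    field_simp at h
    linarith
  obtain ⟨η, K, hηpos, hηδ, hposI, hfbound⟩ :=
    cubic_bound k b δ hδ lam hlamC2 hroot D hD hDpos hW1 e he hv0'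
  -- continuity of a near 1
  have hane : ∀ᶠ x in nhds 1, dist (a x) (a 1) < a 1 / 4 := by
    have hball : Metric.ball (a 1) (a 1 / 4) ∈ nhds (a 1) :=
      Metric.ball_mem_nhds _ (by linarith)
    filter_upwards [ha1.eventually_mem hball] with x hx
    exact Metric.mem_ball.1 hx
  rcases Metric.eventually_nhds_iff_ball.1 hane with ⟨r₂, hr₂, hball₂⟩
  set η₂ := min η (r₂/2) with hη₂
  have hη₂pos : 0 < η₂ := lt_min hηpos (by linarith)
  have hη₂η : η₂ ≤ η := min_le_left _ _
  have hη₂r : η₂ ≤ r₂/2 := min_le_right _ _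
  have hIccsub : Set.Icc (1-η₂) (1+η₂) ⊆ Set.Icc (1-η) (1+η) :=
    Set.Icc_subset_Icc (by linarith) (by linarith)
  have hIoosub : Set.Icc (1-η₂) (1+η₂) ⊆ Set.Ioo (1-δ) (1+δ) := by
    intro x hx
    constructor
    · have := hx.1; linarith [lt_of_le_of_lt hη₂η hηδ]
    · have := hx.2; linarith [lt_of_le_of_lt hη₂η hηδ]
  have hballsub : ∀ x ∈ Set.Icc (1-η₂) (1+η₂), dist (a x) (a 1) < a 1 / 4 := by
    intro x hx
    apply hball₂
    rw [Metric.mem_ball, Real.dist_eq]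
    have h1 := hx.1; have h2 := hx.2
    have h3 : |x - 1| ≤ η₂ := abs_le.2 ⟨by linarith, by linarith⟩
    calc |x - 1| ≤ η₂ := h3
      _ ≤ r₂/2 := hη₂r
      _ < r₂ := by linarith
  have hU : ∀ᶠ n in Filter.atTop, ∀ x ∈ Set.Ioo (1-δ) (1+δ),
      dist (a x) ((P n).eval x / lam x ^ n) < a 1 / 4 :=
    (Metric.tendstoUniformlyOn_iff.1 hunif) (a 1/4) (by linarith)
  set β := (1+α)/4 with hβ
  have hβpos : 0 < β := by rw [hβ]; linarith
  have htendt : Filter.Tendsto (fun n:ℕ => (n:ℝ)^(-β)) Filter.atTop (nhds 0) :=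
    (tendsto_rpow_neg_atTop hβpos).comp tendsto_natCast_atTop_atTop
  have hsmall : ∀ᶠ n : ℕ in Filter.atTop, ((n:ℝ))^(-β) < min η₂ (1/2) :=
    htendt.eventually_lt_const (lt_min hη₂pos (by norm_num))
  -- main eventual bound
  have hmain : ∀ᶠ n in Filter.atTop,
      (∑ i ∈ (P n).support,
        if ε * (n : ℝ) ^ α < |(i : ℝ) - e * n| then (P n).coeff i else 0) / (P n).eval 1
      ≤ 8 * Real.exp (K * (n:ℝ)^(1-3*β) - (ε/2) * (n:ℝ)^(α-β)) := by
    filter_upwards [hU, hsmall, Filter.eventually_ge_atTop 1] with n hUn htn hn1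
    have hnR : (0:ℝ) < n := by exact_mod_cast hn1
    set t := ((n:ℕ):ℝ)^(-β) with htdef
    have ht0 : 0 < t := Real.rpow_pos_of_pos hnR _
    have htη : t ≤ η₂ := le_of_lt (lt_of_lt_of_le htn (min_le_left _ _))
    have ht2 : t ≤ 1/2 := le_of_lt (lt_of_lt_of_le htn (min_le_right _ _))
    set xp := 1 + t with hxpdef
    set xm := 1 - t with hxmdef
    have hxp1 : 1 < xp := by rw [hxpdef]; linarith
    have hxp0 : 0 < xp := by linarith
    have hxm0 : 0 < xm := by rw [hxmdef]; linarith
    have hxm1 : xm < 1 := by rw [hxmdef]; linarith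
    have hmemp : xp ∈ Set.Icc (1-η₂) (1+η₂) :=
      ⟨by rw [hxpdef]; linarith, by rw [hxpdef]; linarith⟩
    have hmemm : xm ∈ Set.Icc (1-η₂) (1+η₂) :=
      ⟨by rw [hxmdef]; linarith, by rw [hxmdef]; linarith⟩
    have h1mem : (1:ℝ) ∈ Set.Icc (1-η₂) (1+η₂) := ⟨by linarith, by linarith⟩
    have hlamp : 0 < lam xp := (hposI xp (hIccsub hmemp)).1
    have hlamm : 0 < lam xm := (hposI xm (hIccsub hmemm)).1
    have hPn1pos : 0 < (P n).eval 1 := hPpos n hn1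
    have hPn1 : (a 1/2) * D^n ≤ (P n).eval 1 := by
      have h := hUn 1 (hIoosub h1mem)
      rw [Real.dist_eq] at h
      have hlam1 : lam 1 ^ n = D ^ n := by rw [← hD]
      rw [hlam1] at h
      have habs := abs_lt.1 h
      have hDn : (0:ℝ) < D^n := pow_pos hDpos n
      have hq : a 1/2 ≤ (P n).eval 1 / D^n := by linarith [habs.2, hapos]
      calc (a 1/2) * D^n ≤ ((P n).eval 1 / D^n) * D^n :=
          mul_le_mul_of_nonneg_right hq hDn.le
        _ = (P n).eval 1 := div_mul_cancel₀ _ hDn.ne'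
    have hPnx : ∀ x ∈ Set.Icc (1-η₂) (1+η₂), 0 < lam x →
        (P n).eval x ≤ (2 * a 1) * lam x ^ n := by
      intro x hx hlx
      have hlxn : 0 < lam x ^ n := pow_pos hlx n
      have h := hUn x (hIoosub hx)
      rw [Real.dist_eq] at h
      have h2 := hballsub x hx
      rw [Real.dist_eq] at h2
      have ha := abs_lt.1 h
      have hb := abs_lt.1 h2
      have hq : (P n).eval x / lam x ^ n ≤ 2 * a 1 := by linarith [ha.1, hb.2, hapos]
      calc (P n).eval x = ((P n).eval x / lam x ^ n) * lam x ^ n :=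
          (div_mul_cancel₀ _ hlxn.ne').symm
        _ ≤ (2 * a 1) * lam x ^ n := mul_le_mul_of_nonneg_right hq hlxn.le
    set c := ε * ((n:ℕ):ℝ)^α with hcdef
    have hc0 : 0 ≤ c := mul_nonneg hε.le (Real.rpow_nonneg (Nat.cast_nonneg n) α)
    have hsplit : (∑ i ∈ (P n).support, if c < |(i:ℝ) - e * n| then (P n).coeff i else 0)
        = (∑ i ∈ (P n).support, if e * n + c < (i:ℝ) then (P n).coeff i else 0)
        + (∑ i ∈ (P n).support, if (i:ℝ) < e * n - c then (P n).coeff i else 0) := by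
      rw [← Finset.sum_add_distrib]
      refine Finset.sum_congr rfl fun i _ => ?_
      by_cases h1 : e * (n:ℝ) + c < (i:ℝ) <;> by_cases h2 : (i:ℝ) < e * (n:ℝ) - c
      · exfalso; linarith
      · rw [if_pos, if_pos h1, if_neg h2, add_zero]
        exact lt_abs.2 (Or.inl (by linarith))
      · rw [if_pos, if_neg h1, if_pos h2, zero_add]
        exact lt_abs.2 (Or.inr (by linarith))
      · rw [if_neg, if_neg h1, if_neg h2, add_zero]
        exact not_lt.2 (abs_le.2 ⟨by linarith, by linarith⟩)
    have hS1 := chernoff_bound' (P n) (hcoeff n) xp (e*(n:ℝ) + c) hxp0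
      (fun i => e*(n:ℝ) + c < (i:ℝ))
      (fun i hi => (Real.rpow_le_rpow_left_iff hxp1).2 hi.le)
    have hS2 := chernoff_bound' (P n) (hcoeff n) xm (e*(n:ℝ) - c) hxm0
      (fun i => (i:ℝ) < e*(n:ℝ) - c)
      (fun i hi => (Real.rpow_le_rpow_left_iff_of_base_lt_one hxm0 hxm1).2 hi.le)
    set E₀ := K * ((n:ℕ):ℝ)^(1-3*β) - (ε/2) * ((n:ℕ):ℝ)^(α-β) with hE₀
    have t3 : (n:ℝ) * (K * t^3) = K * ((n:ℕ):ℝ)^(1-3*β) := by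
      rw [htdef]; exact rpow_arith1 n hn1 β K
    have t4 : c * (t/2) = (ε/2) * ((n:ℕ):ℝ)^(α-β) := by
      rw [hcdef, htdef]; exact rpow_arith2 n hn1 α β ε
    -- upper point estimates
    have habs_p : |xp - 1| = t := by
      rw [hxpdef]
      have : (1 + t) - 1 = t := by ring
      rw [this, abs_of_nonneg ht0.le]
    have habs_m : |xm - 1| = t := by
      rw [hxmdef]
      have : (1 - t) - 1 = -t := by ring
      rw [this, abs_neg, abs_of_nonneg ht0.le]
    have hfp : Real.log (lam xp) - Real.log D - e * Real.log xp ≤ K * t^3 := by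
      have h := hfbound xp (hIccsub hmemp)
      rw [habs_p] at h
      exact le_trans (le_abs_self _) h
    have hfm : Real.log (lam xm) - Real.log D - e * Real.log xm ≤ K * t^3 := by
      have h := hfbound xm (hIccsub hmemm)
      rw [habs_m] at h
      exact le_trans (le_abs_self _) h
    have hlogp : t/2 ≤ Real.log xp := by
      rw [hxpdef]; exact log_lower t ht0.le ht2
    have hlogm : Real.log xm ≤ -t := by
      rw [hxmdef]; exact log_upper t ht0.le ht2
    have hE1 : (n:ℝ) * Real.log (lam xp) - (n:ℝ) * Real.log D - (e*(n:ℝ) + c) * Real.log xp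
        ≤ E₀ := by
      have t1 : (n:ℝ) * (Real.log (lam xp) - Real.log D - e * Real.log xp) ≤ (n:ℝ) * (K * t^3) :=
        mul_le_mul_of_nonneg_left hfp hnR.le
      have t2 : c * (t/2) ≤ c * Real.log xp := mul_le_mul_of_nonneg_left hlogp hc0
      calc (n:ℝ) * Real.log (lam xp) - (n:ℝ) * Real.log D - (e*(n:ℝ) + c) * Real.log xp
          = (n:ℝ) * (Real.log (lam xp) - Real.log D - e * Real.log xp) - c * Real.log xp := by
            ring
        _ ≤ (n:ℝ) * (K * t^3) - c * (t/2) := by linarith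
        _ = E₀ := by rw [t3, t4, hE₀]
    have hE2 : (n:ℝ) * Real.log (lam xm) - (n:ℝ) * Real.log D - (e*(n:ℝ) - c) * Real.log xm
        ≤ E₀ := by
      have t1 : (n:ℝ) * (Real.log (lam xm) - Real.log D - e * Real.log xm) ≤ (n:ℝ) * (K * t^3) :=
        mul_le_mul_of_nonneg_left hfm hnR.le
      have t2 : c * Real.log xm ≤ c * (-t) := mul_le_mul_of_nonneg_left hlogm hc0
      have hct : 0 ≤ c * t := mul_nonneg hc0 ht0.le
      calc (n:ℝ) * Real.log (lam xm) - (n:ℝ) * Real.log D - (e*(n:ℝ) - c) * Real.log xm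
          = (n:ℝ) * (Real.log (lam xm) - Real.log D - e * Real.log xm) + c * Real.log xm := by
            ring
        _ ≤ (n:ℝ) * (K * t^3) + c * (-t) := by linarith
        _ ≤ (n:ℝ) * (K * t^3) - c * (t/2) := by linarith
        _ = E₀ := by rw [t3, t4, hE₀]
    have hcomb : ∀ (x M S : ℝ), 0 < x → 0 < lam x → x ∈ Set.Icc (1-η₂) (1+η₂) →
        S ≤ (P n).eval x / x ^ M →
        (n:ℝ) * Real.log (lam x) - (n:ℝ) * Real.log D - M * Real.log x ≤ E₀ →
        S / (P n).eval 1 ≤ 4 * Real.exp E₀ := by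
      intro x M S hx hlx hmem hS hE
      have hxM : (0:ℝ) < x ^ M := Real.rpow_pos_of_pos hx M
      have hlxn : 0 < lam x ^ n := pow_pos hlx n
      have hnum : S ≤ ((2 * a 1) * lam x ^ n) / x ^ M := by
        refine le_trans hS ?_
        gcongr
        exact hPnx x hmem hlx
      have hfrac : S / (P n).eval 1 ≤ (((2 * a 1) * lam x ^ n) / x ^ M) / ((a 1/2) * D^n) := by
        refine div_le_div₀ ?_ hnum ?_ hPn1
        · positivity
        · positivity
      refine le_trans hfrac ?_
      have hrw : (((2 * a 1) * lam x ^ n) / x ^ M) / ((a 1/2) * D^n)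
          = 4 * (lam x ^ n / (D^n * x ^ M)) := by
        have ha0 : a 1 ≠ 0 := hapos.ne'
        field_simp
        ring
      rw [hrw, quotient_exp_form (lam x) D x hlx hDpos hx n M]
      have hee := Real.exp_le_exp.2 hE
      linarith
    have h1 := hcomb xp (e*(n:ℝ) + c) _ hxp0 hlamp hmemp hS1 hE1
    have h2 := hcomb xm (e*(n:ℝ) - c) _ hxm0 hlamm hmemm hS2 hE2
    rw [hsplit, add_div]
    calc (∑ i ∈ (P n).support, if e * (n:ℝ) + c < (i:ℝ) then (P n).coeff i else 0) / (P n).eval 1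
        + (∑ i ∈ (P n).support, if (i:ℝ) < e * (n:ℝ) - c then (P n).coeff i else 0) / (P n).eval 1
        ≤ 4 * Real.exp E₀ + 4 * Real.exp E₀ := add_le_add h1 h2
      _ = 8 * Real.exp E₀ := by ring
  refine squeeze_zero' ?_ hmain ?_
  · filter_upwards [Filter.eventually_ge_atTop 1] with n hn1
    refine div_nonneg (Finset.sum_nonneg fun i _ => ?_) (hPpos n hn1).le
    split_ifs
    · exact hcoeff n i
    · exact le_rfl
  · have hlim := exp_lim K (ε/2) (1-3*β) (α-β) (by linarith)
      (by rw [hβ]; linarith) (by rw [hβ]; linarith)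
    simpa using hlim.const_mul 8
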